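/- Let F be a field, let s ≥ 2 and t ≥ 2 be integers, and let C be an invertible 2×2 matrix over F with entries C₀₀, C₀₁, C₁₀, C₁₁. Let A, B : (ZMod s) × (Fin t) × (Fin t → ZMod s) → F be functions satisfying the pairwise coupling relations: for all x ∈ ZMod s, y ∈ Fin t, z : Fin t → ZMod s, (i) if z(y) = x then A(x,y,z) = B(x,y,z), and (ii) if z(y) ≠ x then A(x,y,z) = C₀₀·B(x,y,z) + C₀₁·B(z(y),y,z(x,y)) and A(z(y),y,z(x,y)) = C₁₀·B(x,y,z) + C₁₁·B(z(y),y,z(x,y)), where z(x,y) denotes the vector obtained from z by replacing its y-th entry with x. Let P ⊆ (ZMod s) × (Fin t), and for y ∈ Fin t set P_y = { x : (x,y) ∈ P }. If A(x,y,z) = 0 for all (x,y) ∈ P and all z : Fin t → ZMod s, then B(x',y',z') = 0 for every x' ∈ ZMod s, y' ∈ Fin t, z' : Fin t → ZMod s such that x' ∈ P_{y'} and z'(y') ∈ P_{y'}. -/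

import Mathlib

/-- Coupling lemma for the Pairwise Coupling Transform (PCT):
if all coupled symbols `A` indexed by node pairs in `P` vanish (for every
intra-node position `z`), then the uncoupled symbols `B(x',y',z')` vanish
whenever both `x'` and `z'(y')` belong to `P_{y'}`. -/
theorem pct_coupling_lemma
    (F : Type*) [Field F] (s t : ℕ) (hs : 2 ≤ s) (ht : 2 ≤ t)
    (C : Matrix (Fin 2) (Fin 2) F) (hC : IsUnit C)
    (A B : ZMod s → Fin t → (Fin t → ZMod s) → F)
    (hdiag : ∀ (x : ZMod s) (y : Fin t) (z : Fin t → ZMod s),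
      z y = x → A x y z = B x y z)
    (hcoup : ∀ (x : ZMod s) (y : Fin t) (z : Fin t → ZMod s), z y ≠ x →
      A x y z = C 0 0 * B x y z + C 0 1 * B (z y) y (Function.update z y x) ∧
      A (z y) y (Function.update z y x)
        = C 1 0 * B x y z + C 1 1 * B (z y) y (Function.update z y x))
    (P : Set (ZMod s × Fin t))
    (hA : ∀ p ∈ P, ∀ z : Fin t → ZMod s, A p.1 p.2 z = 0) :
    ∀ (x' : ZMod s) (y' : Fin t) (z' : Fin t → ZMod s),
      (x', y') ∈ P → (z' y', y') ∈ P → B x' y' z' = 0 := by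
  intro x' y' z' hx hz
  by_cases h : z' y' = x'
  · rw [← hdiag x' y' z' h]; exact hA _ hx z'
  · obtain ⟨h1, h2⟩ := hcoup x' y' z' h
    have e1 : C 0 0 * B x' y' z' + C 0 1 * B (z' y') y' (Function.update z' y' x') = 0 := by
      rw [← h1]; exact hA _ hx z'
    have e2 : C 1 0 * B x' y' z' + C 1 1 * B (z' y') y' (Function.update z' y' x') = 0 := by
      rw [← h2]; exact hA _ hz _
    set v : Fin 2 → F := ![B x' y' z', B (z' y') y' (Function.update z' y' x')] with hv
    have hmv : C.mulVec v = 0 := by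
      funext i
      fin_cases i <;>
        simp [Matrix.mulVec, dotProduct, Fin.sum_univ_two, hv] <;>
        [exact e1; exact e2]
    have hinv := hC.invertible
    have : v = 0 := by
      have := congrArg (C⁻¹.mulVec ·) hmv
      simpa only [Matrix.mulVec_mulVec, Matrix.nonsing_inv_mul C
        ((Matrix.isUnit_iff_isUnit_det C).mp hC), Matrix.one_mulVec, Matrix.mulVec_zero] using this
    have := congrFun this 0
    simpa [hv] using this
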